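/- For a 2×2 Hermitian H = ηI + ασ_z + κσ_x with Ω = √(α²+κ²) ≠ 0, the unitary e^{-iHL} equals the target U = e^{iη'}[[r e^{iφ}, √(1-r²)e^{iδ}],[-√(1-r²)e^{-iδ}, re^{-iφ}]] with δ = -π/2 convention if and only if (up to the stated phase conditions): cos(ΩL) and the ratios α/Ω, κ/Ω satisfy r e^{iφ'} = cos(ΩL) - i(α/Ω) sin(ΩL) and √(1-r²) = (κ/Ω)|sin(ΩL)|. In particular, choosing κ₄ = √(1-r²) θ/(L sin θ), α₄ = r sin(ζ) κ₄/√(1-r²), with θ = arccos(r cos ζ), one has Ω L = θ and the matrix e^{-iH₄L} has off-diagonal modulus √(1-r²). -/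

import Mathlib

open Matrix Complex

set_option maxHeartbeats 1000000 in
lemma exp_two_by_two (A : Matrix (Fin 2) (Fin 2) ℂ) (θ : ℝ) (hθ : (θ:ℂ) ≠ 0)
    (h : A ^ 2 = (-((θ:ℂ)) ^ 2) • (1 : Matrix (Fin 2) (Fin 2) ℂ)) :
    NormedSpace.exp A = (Real.cos θ : ℂ) • (1 : Matrix (Fin 2) (Fin 2) ℂ)
      + ((Real.sin θ : ℂ) / θ) • A := by
  letI : SeminormedRing (Matrix (Fin 2) (Fin 2) ℂ) := Matrix.linftyOpSemiNormedRing
  letI : NormedRing (Matrix (Fin 2) (Fin 2) ℂ) := Matrix.linftyOpNormedRing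
  letI : NormedAlgebra ℂ (Matrix (Fin 2) (Fin 2) ℂ) := Matrix.linftyOpNormedAlgebra
  have heven : ∀ k : ℕ, A ^ (2 * k) = ((-((θ:ℂ)) ^ 2) ^ k) • (1 : Matrix (Fin 2) (Fin 2) ℂ) := by
    intro k
    induction k with
    | zero => simp
    | succ n ih =>
      rw [mul_add, pow_add, ih, mul_one, h, smul_mul_assoc, Matrix.mul_smul, one_mul,
        smul_smul, ← pow_succ]
  have hodd : ∀ k : ℕ, A ^ (2 * k + 1) = ((-((θ:ℂ)) ^ 2) ^ k) • A := by
    intro k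
    rw [pow_succ, heven, smul_mul_assoc, one_mul]
  have hcos : HasSum (fun k : ℕ => ((((2 * k).factorial : ℕ) : ℂ))⁻¹ • A ^ (2 * k))
      ((Real.cos θ : ℂ) • (1 : Matrix (Fin 2) (Fin 2) ℂ)) := by
    have h1 := (Complex.hasSum_cos (θ:ℂ)).smul_const (1 : Matrix (Fin 2) (Fin 2) ℂ)
    rw [← Complex.ofReal_cos] at h1
    convert h1 using 2 with k
    rw [heven, smul_smul]
    congr 1
    have hf : (((2 * k).factorial : ℕ) : ℂ) ≠ 0 := Nat.cast_ne_zero.mpr (Nat.factorial_ne_zero _)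
    rw [neg_pow, pow_mul]
    field_simp
  have hsin : HasSum (fun k : ℕ => ((((2 * k + 1).factorial : ℕ) : ℂ))⁻¹ • A ^ (2 * k + 1))
      (((Real.sin θ : ℂ) / θ) • A) := by
    have h1 := ((Complex.hasSum_sin (θ:ℂ)).div_const (θ:ℂ)).smul_const A
    rw [← Complex.ofReal_sin] at h1
    convert h1 using 2 with k
    rw [hodd, smul_smul]
    congr 1
    have hf : (((2 * k + 1).factorial : ℕ) : ℂ) ≠ 0 := Nat.cast_ne_zero.mpr (Nat.factorial_ne_zero _)
    rw [neg_pow, pow_add, pow_mul, pow_one]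
    field_simp
  exact (NormedSpace.exp_series_hasSum_exp' A).unique (hcos.even_add_odd hsin)

set_option maxHeartbeats 1000000 in
/-- **Parameters of the fourth section.**
For `r ∈ (0,1)`, `ζ ∈ ℝ`, `L > 0`, with `θ = arccos(r cos ζ)`,
`κ₄ = √(1-r²) θ / (L sin θ)` and `α₄ = r sin(ζ) κ₄ / √(1-r²)`, one has
`√(α₄² + κ₄²) · L = θ`, and the `(1,2)` entry of `exp(-i(α₄σ_z + κ₄σ_x)L)` has
modulus `√(1-r²)`. -/
theorem fourth_section_parameters (r ζ L : ℝ) (hr : r ∈ Set.Ioo (0 : ℝ) 1) (hL : 0 < L)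
    (θ κ₄ α₄ : ℝ)
    (hθ : θ = Real.arccos (r * Real.cos ζ))
    (hκ : κ₄ = Real.sqrt (1 - r ^ 2) * θ / (L * Real.sin θ))
    (hα : α₄ = r * Real.sin ζ * κ₄ / Real.sqrt (1 - r ^ 2))
    (σx σz : Matrix (Fin 2) (Fin 2) ℂ)
    (hσx : σx = !![0, 1; 1, 0]) (hσz : σz = !![1, 0; 0, -1]) :
    Real.sqrt (α₄ ^ 2 + κ₄ ^ 2) * L = θ ∧
    ‖((NormedSpace.exp
            ((-(Complex.I * (L : ℂ))) • ((α₄ : ℂ) • σz + (κ₄ : ℂ) • σx))) 0 1)‖ =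
      Real.sqrt (1 - r ^ 2) := by
  obtain ⟨hr0, hr1⟩ := hr
  have h1r : (0:ℝ) < 1 - r ^ 2 := by nlinarith
  set s := Real.sqrt (1 - r ^ 2) with hs
  have hs0 : 0 < s := Real.sqrt_pos.mpr h1r
  have hs2 : s ^ 2 = 1 - r ^ 2 := Real.sq_sqrt h1r.le
  have hx1 : |r * Real.cos ζ| < 1 := by
    have hc := Real.abs_cos_le_one ζ
    rw [abs_mul]
    calc |r| * |Real.cos ζ| ≤ |r| * 1 := by
          exact mul_le_mul_of_nonneg_left hc (abs_nonneg r)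
      _ = |r| := mul_one _
      _ < 1 := by rw [abs_of_pos hr0]; exact hr1
  have hθpos : 0 < θ := by
    rw [hθ]; exact Real.arccos_pos.mpr (by linarith [abs_lt.mp hx1])
  have hθpi : θ < Real.pi := by
    rw [hθ]
    refine lt_of_le_of_ne (Real.arccos_le_pi _) fun hcon => ?_
    have := Real.arccos_eq_pi.mp hcon
    linarith [abs_lt.mp hx1]
  have hsinθ : 0 < Real.sin θ := Real.sin_pos_of_pos_of_lt_pi hθpos hθpi
  have hcosθ : Real.cos θ = r * Real.cos ζ := by
    rw [hθ]; exact Real.cos_arccos (by linarith [abs_lt.mp hx1]) (by linarith [abs_lt.mp hx1])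
  have hsin2 : Real.sin θ ^ 2 = 1 - (r * Real.cos ζ) ^ 2 := by
    have := Real.sin_sq_add_cos_sq θ
    rw [hcosθ] at this; linarith
  have hκpos : 0 < κ₄ := by
    rw [hκ]; positivity
  have hsum : α₄ ^ 2 + κ₄ ^ 2 = (θ / L) ^ 2 := by
    have hζ : Real.sin ζ ^ 2 = 1 - Real.cos ζ ^ 2 := by
      have := Real.sin_sq_add_cos_sq ζ; linarith
    have hkey : r ^ 2 * Real.sin ζ ^ 2 + s ^ 2 = Real.sin θ ^ 2 := by
      linear_combination r ^ 2 * hζ + hs2 - hsin2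
    rw [hα, hκ]
    field_simp
    linear_combination hkey
  have part1 : Real.sqrt (α₄ ^ 2 + κ₄ ^ 2) * L = θ := by
    rw [hsum, Real.sqrt_sq (by positivity)]
    field_simp
  refine ⟨part1, ?_⟩
  have hθL2 : (α₄ ^ 2 + κ₄ ^ 2) * L ^ 2 = θ ^ 2 := by
    rw [← part1, mul_pow, Real.sq_sqrt (by positivity)]
  set M : Matrix (Fin 2) (Fin 2) ℂ :=
    (-(Complex.I * (L : ℂ))) • ((α₄ : ℂ) • σz + (κ₄ : ℂ) • σx) with hM
  have hM2 : M ^ 2 = (-((θ:ℂ)) ^ 2) • (1 : Matrix (Fin 2) (Fin 2) ℂ) := by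
    have hc : ((α₄:ℂ) ^ 2 + (κ₄:ℂ) ^ 2) * (L:ℂ) ^ 2 = (θ:ℂ) ^ 2 := by
      exact_mod_cast congrArg (Complex.ofReal) hθL2
    rw [hM, hσx, hσz]
    ext i j
    fin_cases i <;> fin_cases j <;>
      simp [pow_two, Matrix.mul_apply, Fin.sum_univ_succ, Matrix.one_apply]
    all_goals try ring
    all_goals linear_combination Complex.I ^ 2 * hc + (((θ : ℝ)) : ℂ) ^ 2 * Complex.I_sq
  have hθC : ((θ:ℝ):ℂ) ≠ 0 := by exact_mod_cast hθpos.ne'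
  have hexp := exp_two_by_two M θ hθC hM2
  rw [hexp]
  have hM01 : M 0 1 = -(Complex.I * (L:ℂ)) * (κ₄:ℂ) := by
    rw [hM, hσx, hσz]; simp
  simp only [Matrix.add_apply, Matrix.smul_apply, Matrix.one_apply_ne (by decide : (0:Fin 2) ≠ 1),
    hM01, smul_eq_mul, mul_zero, zero_add]
  simp only [norm_mul, norm_div, norm_neg, Complex.norm_real, Real.norm_eq_abs, Complex.norm_I, one_mul]
  rw [abs_of_pos hsinθ, abs_of_pos hθpos, abs_of_pos hL, abs_of_pos hκpos, hκ]
  field_simp
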